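/- Let E be a closed subset of ∂T with cap^T(E) > 0. Then lim_{n→∞} cap^T_n(E) = +∞. -/

import Mathlib

open scoped ENNReal NNReal
open Filter Topology

noncomputable section

/-- The vertex set of the dyadic tree `T`: finite binary strings. The boundary `∂T`
is the set of infinite binary sequences `ℕ → Bool`. `pre ζ k` is the prefix of
length `k` of the boundary point `ζ`. -/
def pre (ζ : ℕ → Bool) (k : ℕ) : List Bool := List.ofFn (fun i : Fin k => ζ i)

/-- The tree condenser capacity `cap^T_n(E)`: the infimum of `Σ_x φ(x)²` over
`φ : T → [0,∞)` with `Iφ(ζ) = Σ_{x ∈ P(ζ)} φ(x) ≥ 1` on `E` and `φ(x) = 0`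
whenever `d(x) ≤ n-1`.  For `n = 0` this is the tree capacity `cap^T(E)`. -/
noncomputable def treeCapN (n : ℕ) (E : Set (ℕ → Bool)) : ℝ≥0∞ :=
  sInf { c | ∃ φ : List Bool → ℝ≥0,
    (∀ ζ ∈ E, 1 ≤ ∑' k : ℕ, (φ (pre ζ k) : ℝ≥0∞)) ∧
    (∀ x : List Bool, x.length < n → φ x = 0) ∧
    c = ∑' x : List Bool, (φ x : ℝ≥0∞) ^ 2 }

/-- The tree capacity `cap^T(E)` of a set `E ⊆ ∂T`. -/
noncomputable def treeCap (E : Set (ℕ → Bool)) : ℝ≥0∞ := treeCapN 0 E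

lemma pre_length (ζ : ℕ → Bool) (k : ℕ) : (pre ζ k).length = k := by
  simp [pre]

/-- Monotonicity of the condenser capacity in `n`. -/
lemma treeCapN_mono (E : Set (ℕ → Bool)) : Monotone (fun n => treeCapN n E) := by
  intro m n hmn
  apply sInf_le_sInf
  rintro c ⟨φ, h1, h2, h3⟩
  exact ⟨φ, h1, fun x hx => h2 x (hx.trans_le hmn), h3⟩

/-- Compactness truncation: if `Iφ ≥ 1` on a closed set `E`, then some finite
level `M` already accumulates at least `1/2` uniformly on `E`. -/
lemma exists_half (E : Set (ℕ → Bool)) (hE : IsClosed E) (φ : List Bool → ℝ≥0)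
    (h : ∀ ζ ∈ E, 1 ≤ ∑' k : ℕ, (φ (pre ζ k) : ℝ≥0∞)) :
    ∃ M : ℕ, ∀ ζ ∈ E, (2 : ℝ≥0∞)⁻¹ ≤ ∑ k ∈ Finset.range M, (φ (pre ζ k) : ℝ≥0∞) := by
  set S : ℕ → (ℕ → Bool) → ℝ≥0∞ := fun M ζ => ∑ k ∈ Finset.range M, (φ (pre ζ k) : ℝ≥0∞)
    with hS
  have hSc : ∀ M, Continuous (S M) := by
    intro M
    apply continuous_finset_sum
    intro k _
    have : (fun ζ : ℕ → Bool => (φ (pre ζ k) : ℝ≥0∞)) =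
        (fun v : Fin k → Bool => (φ (List.ofFn v) : ℝ≥0∞)) ∘ (fun ζ (i : Fin k) => ζ i) := rfl
    rw [this]
    exact Continuous.comp continuous_of_discreteTopology
      (continuous_pi fun i => continuous_apply (i : ℕ))
  have hmono : ∀ {M M' : ℕ}, M ≤ M' → ∀ ζ, S M ζ ≤ S M' ζ := fun h ζ =>
    Finset.sum_le_sum_of_subset (Finset.range_subset_range.2 h)
  have hcover : E ⊆ ⋃ M : ℕ, S M ⁻¹' Set.Ioi (2 : ℝ≥0∞)⁻¹ := by
    intro ζ hζ
    have h1 := h ζ hζ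
    rw [ENNReal.tsum_eq_iSup_nat] at h1
    have h2 : (2 : ℝ≥0∞)⁻¹ < ⨆ n, S n ζ := lt_of_lt_of_le (by norm_num) h1
    rw [lt_iSup_iff] at h2
    obtain ⟨M, hM⟩ := h2
    exact Set.mem_iUnion.2 ⟨M, hM⟩
  have hcomp : IsCompact E := hE.isCompact
  obtain ⟨t, ht⟩ := hcomp.elim_finite_subcover _
    (fun M => isOpen_Ioi.preimage (hSc M)) hcover
  refine ⟨t.sup id, ?_⟩
  intro ζ hζ
  obtain ⟨m, hmt, hm⟩ := Set.mem_iUnion₂.1 (ht hζ)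
  exact le_trans (le_of_lt hm) (hmono (Finset.le_sup (f := id) hmt) ζ)

/-- If the values are pairwise "disjoint" (product zero), the square of the sum
is the sum of the squares. -/
lemma sq_sum_of_pairwise {ι : Type*} (s : Finset ι) (a : ι → ℝ≥0∞)
    (h : ∀ i ∈ s, ∀ j ∈ s, i ≠ j → a i * a j = 0) :
    (∑ i ∈ s, a i) ^ 2 = ∑ i ∈ s, (a i) ^ 2 := by
  classical
  induction s using Finset.induction_on with
  | empty => simp
  | @insert i s hi ih =>
    have hcross : a i * ∑ j ∈ s, a j = 0 := by
      rw [Finset.mul_sum]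
      refine Finset.sum_eq_zero fun j hj => ?_
      exact h i (Finset.mem_insert_self i s) j (Finset.mem_insert_of_mem hj)
        (fun hij => hi (hij ▸ hj))
    rw [Finset.sum_insert hi, Finset.sum_insert hi, add_sq,
      ih (fun x hx y hy hxy => h x (Finset.mem_insert_of_mem hx) y
        (Finset.mem_insert_of_mem hy) hxy),
      mul_assoc, hcross, mul_zero, add_zero]

/-- Let `E` be a closed subset of `∂T` with `cap^T(E) > 0`. Then
`lim_{n→∞} cap^T_n(E) = +∞`. -/
theorem tree_condenser_capacity_blows_up
    (E : Set (ℕ → Bool)) (hE : IsClosed E) (hpos : 0 < treeCap E) :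
    Filter.Tendsto (fun n : ℕ => treeCapN n E) Filter.atTop (𝓝 ⊤) := by
  classical
  have hmono : Monotone (fun n => treeCapN n E) := treeCapN_mono E
  have key : (⨆ n, treeCapN n E) = ⊤ := by
    by_contra hC
    set C := ⨆ n, treeCapN n E with hCdef
    have hCne : C ≠ ⊤ := hC
    have hle : ∀ n, treeCapN n E ≤ C := fun n => le_iSup (fun n => treeCapN n E) n
    -- for each `n`, pick a near-optimal admissible `φ` vanishing below level `n`,
    -- together with a truncation level `M > n`
    have step : ∀ n : ℕ, ∃ φ : List Bool → ℝ≥0, ∃ M : ℕ,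
        n < M ∧
        (∀ x : List Bool, x.length < n → φ x = 0) ∧
        (∑' x : List Bool, (φ x : ℝ≥0∞) ^ 2) < C + 1 ∧
        (∀ ζ ∈ E, (2 : ℝ≥0∞)⁻¹ ≤ ∑ k ∈ Finset.range M, (φ (pre ζ k) : ℝ≥0∞)) := by
      intro n
      have h1 : treeCapN n E < C + 1 :=
        lt_of_le_of_lt (hle n) (ENNReal.lt_add_right hCne one_ne_zero)
      obtain ⟨c, hc, hlt⟩ := sInf_lt_iff.mp h1
      obtain ⟨φ, hadm, hzero, rfl⟩ := hc
      obtain ⟨M0, hM0⟩ := exists_half E hE φ hadm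
      refine ⟨φ, max M0 (n + 1),
        lt_of_lt_of_le (Nat.lt_succ_self n) (le_max_right _ _), hzero, hlt, ?_⟩
      intro ζ hζ
      exact (hM0 ζ hζ).trans
        (Finset.sum_le_sum_of_subset (Finset.range_subset_range.2 (le_max_left _ _)))
    choose Φ Mf hM hzero hen hhalf using step
    -- the sequence of levels
    let nseq : ℕ → ℕ := fun j => Nat.rec (motive := fun _ => ℕ) 0 (fun _ prev => Mf prev) j
    have nseq_succ : ∀ j, nseq (j + 1) = Mf (nseq j) := fun j => rfl
    have nseq_lt : ∀ j, nseq j < nseq (j + 1) := fun j => hM (nseq j)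
    have nseq_smono : StrictMono nseq := strictMono_nat_of_lt_succ nseq_lt
    -- the truncated functions, with disjoint "bands" of levels
    set ψ : ℕ → List Bool → ℝ≥0 := fun j x =>
      if nseq j ≤ x.length ∧ x.length < nseq (j + 1) then 2 * Φ (nseq j) x else 0 with hψ
    -- (a) each ψ j is admissible
    have hψadm : ∀ j, ∀ ζ ∈ E, (1 : ℝ≥0∞) ≤ ∑' k : ℕ, (ψ j (pre ζ k) : ℝ≥0∞) := by
      intro j ζ hζ
      have keyk : ∀ k < nseq (j + 1),
          (ψ j (pre ζ k) : ℝ≥0∞) = 2 * (Φ (nseq j) (pre ζ k) : ℝ≥0∞) := by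
        intro k hk
        by_cases hle' : nseq j ≤ k
        · rw [hψ]
          simp only [pre_length]
          rw [if_pos ⟨hle', hk⟩]
          push_cast; ring
        · have h0 : Φ (nseq j) (pre ζ k) = 0 :=
            hzero (nseq j) _ (by simpa [pre_length] using lt_of_not_ge hle')
          rw [hψ]
          simp only [pre_length]
          rw [if_neg (by tauto), h0]
          simp
      calc (1 : ℝ≥0∞) = 2 * 2⁻¹ :=
            (ENNReal.mul_inv_cancel (by norm_num) (by norm_num)).symm
        _ ≤ 2 * ∑ k ∈ Finset.range (nseq (j + 1)), (Φ (nseq j) (pre ζ k) : ℝ≥0∞) := by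
            have := hhalf (nseq j) ζ hζ
            rw [← nseq_succ j] at this
            exact mul_le_mul_right this 2
        _ = ∑ k ∈ Finset.range (nseq (j + 1)), (ψ j (pre ζ k) : ℝ≥0∞) := by
            rw [Finset.mul_sum]
            exact Finset.sum_congr rfl fun k hk =>
              (keyk k (Finset.mem_range.1 hk)).symm
        _ ≤ ∑' k : ℕ, (ψ j (pre ζ k) : ℝ≥0∞) := ENNReal.sum_le_tsum _
    -- (b) each ψ j has energy at most 4(C+1)
    have hψen : ∀ j, ∑' x : List Bool, (ψ j x : ℝ≥0∞) ^ 2 ≤ 4 * (C + 1) := by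
      intro j
      have hpt : ∀ x, (ψ j x : ℝ≥0∞) ^ 2 ≤ 4 * (Φ (nseq j) x : ℝ≥0∞) ^ 2 := by
        intro x
        rw [hψ]
        by_cases hx : nseq j ≤ x.length ∧ x.length < nseq (j + 1)
        · simp only [if_pos hx]
          push_cast
          ring_nf
          exact le_refl _
        · simp [if_neg hx]
      calc ∑' x : List Bool, (ψ j x : ℝ≥0∞) ^ 2
          ≤ ∑' x : List Bool, 4 * (Φ (nseq j) x : ℝ≥0∞) ^ 2 := ENNReal.tsum_le_tsum hpt
        _ = 4 * ∑' x : List Bool, (Φ (nseq j) x : ℝ≥0∞) ^ 2 := ENNReal.tsum_mul_left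
        _ ≤ 4 * (C + 1) := mul_le_mul_right (hen (nseq j)).le 4
    -- (c) the bands are disjoint
    have hdisj : ∀ x : List Bool, ∀ i j : ℕ, i ≠ j →
        (ψ i x : ℝ≥0∞) * (ψ j x : ℝ≥0∞) = 0 := by
      intro x i j hij
      by_cases hxi : nseq i ≤ x.length ∧ x.length < nseq (i + 1)
      · by_cases hxj : nseq j ≤ x.length ∧ x.length < nseq (j + 1)
        · exfalso
          rcases lt_or_gt_of_ne hij with h | h
          · exact absurd hxj.1
              (not_le.2 (lt_of_lt_of_le hxi.2 (nseq_smono.monotone (Nat.succ_le_of_lt h))))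
          · exact absurd hxi.1
              (not_le.2 (lt_of_lt_of_le hxj.2 (nseq_smono.monotone (Nat.succ_le_of_lt h))))
        · rw [hψ]; simp [if_neg hxj]
      · rw [hψ]; simp [if_neg hxi]
    -- main estimate: treeCapN 0 E ≤ 4(C+1)/N
    have main : ∀ N : ℕ, 1 ≤ N → treeCapN 0 E ≤ 4 * (C + 1) / N := by
      intro N hN
      have hN0 : (N : ℝ≥0) ≠ 0 := Nat.cast_ne_zero.2 (by omega)
      have hN0' : (N : ℝ≥0∞) ≠ 0 := Nat.cast_ne_zero.2 (by omega)
      have hNtop : (N : ℝ≥0∞) ≠ ⊤ := ENNReal.natCast_ne_top N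
      set φN : List Bool → ℝ≥0 := fun x => (∑ j ∈ Finset.range N, ψ j x) / N with hφN
      have hcoe : ∀ x, (φN x : ℝ≥0∞) =
          (∑ j ∈ Finset.range N, (ψ j x : ℝ≥0∞)) / (N : ℝ≥0∞) := by
        intro x
        rw [hφN]
        simp [ENNReal.coe_div hN0]
      -- admissibility of φN
      have hadmN : ∀ ζ ∈ E, (1 : ℝ≥0∞) ≤ ∑' k : ℕ, (φN (pre ζ k) : ℝ≥0∞) := by
        intro ζ hζ
        have heq : ∑' k : ℕ, (φN (pre ζ k) : ℝ≥0∞) =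
            (∑' k : ℕ, ∑ j ∈ Finset.range N, (ψ j (pre ζ k) : ℝ≥0∞)) / (N : ℝ≥0∞) := by
          simp_rw [hcoe, div_eq_mul_inv, ENNReal.tsum_mul_right]
        rw [heq, Summable.tsum_finsetSum (fun i _ => ENNReal.summable)]
        have hbig : (N : ℝ≥0∞) ≤
            ∑ j ∈ Finset.range N, ∑' k : ℕ, (ψ j (pre ζ k) : ℝ≥0∞) := by
          calc (N : ℝ≥0∞) = ∑ _j ∈ Finset.range N, 1 := by simp
            _ ≤ _ := Finset.sum_le_sum fun j _ => hψadm j ζ hζ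
        calc (1 : ℝ≥0∞) = (N : ℝ≥0∞) / (N : ℝ≥0∞) := (ENNReal.div_self hN0' hNtop).symm
          _ ≤ _ := ENNReal.div_le_div_right hbig _
      -- energy of φN
      have henN : ∑' x : List Bool, (φN x : ℝ≥0∞) ^ 2 ≤ 4 * (C + 1) / N := by
        have h1 : ∀ x, (φN x : ℝ≥0∞) ^ 2 =
            (∑ j ∈ Finset.range N, (ψ j x : ℝ≥0∞) ^ 2) / (N : ℝ≥0∞) ^ 2 := by
          intro x
          rw [hcoe, div_eq_mul_inv, mul_pow, ← ENNReal.inv_pow, ← div_eq_mul_inv,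
            sq_sum_of_pairwise _ _ (fun i _ j _ hij => hdisj x i j hij)]
        calc ∑' x : List Bool, (φN x : ℝ≥0∞) ^ 2
            = (∑' x : List Bool, ∑ j ∈ Finset.range N, (ψ j x : ℝ≥0∞) ^ 2) /
                (N : ℝ≥0∞) ^ 2 := by
              simp_rw [h1, div_eq_mul_inv, ENNReal.tsum_mul_right]
          _ = (∑ j ∈ Finset.range N, ∑' x : List Bool, (ψ j x : ℝ≥0∞) ^ 2) /
                (N : ℝ≥0∞) ^ 2 := by rw [Summable.tsum_finsetSum (fun i _ => ENNReal.summable)]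
          _ ≤ (∑ _j ∈ Finset.range N, 4 * (C + 1)) / (N : ℝ≥0∞) ^ 2 :=
              ENNReal.div_le_div_right (Finset.sum_le_sum fun j _ => hψen j) _
          _ = ((N : ℝ≥0∞) * (4 * (C + 1))) / ((N : ℝ≥0∞) * (N : ℝ≥0∞)) := by
              rw [Finset.sum_const, Finset.card_range, nsmul_eq_mul, sq]
          _ = 4 * (C + 1) / N := ENNReal.mul_div_mul_left _ _ hN0' hNtop
      exact le_trans
        (sInf_le ⟨φN, hadmN, fun x hx => absurd hx (Nat.not_lt_zero _), rfl⟩) henN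
    -- conclude treeCap E = 0, contradiction
    have hK : (4 * (C + 1) : ℝ≥0∞) ≠ ⊤ :=
      ENNReal.mul_ne_top (by simp) (ENNReal.add_ne_top.2 ⟨hCne, by simp⟩)
    have htend : Tendsto (fun N : ℕ => 4 * (C + 1) / (N : ℝ≥0∞)) atTop (𝓝 0) := by
      have := ENNReal.Tendsto.const_mul (a := 4 * (C + 1))
        ENNReal.tendsto_inv_nat_nhds_zero (Or.inr hK)
      simpa [div_eq_mul_inv] using this
    have h0 : treeCapN 0 E ≤ 0 :=
      ge_of_tendsto htend (eventually_atTop.2 ⟨1, fun N hN => main N hN⟩)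
    have : treeCap E = 0 := le_antisymm h0 zero_le
    exact absurd this hpos.ne'
  have h := tendsto_atTop_iSup hmono
  rwa [key] at h
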